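/- Let h > 0, let x_i ∈ ℝ, x_{i−1} = x_i − h, x_{i+1} = x_i + h, and let x∘ ∈ (x_i, x_{i+1}). Let ψ⁻ and ψ⁺ be four-times continuously differentiable real functions on an open interval containing [x_{i−1}, x_{i+1}], and let M⁻ and M⁺ bound |(ψ⁻)''''| and |(ψ⁺)''''| on [x_{i−1}, x_{i+1}]. Define the jump values J_m = (ψ⁺)^{(m)}(x∘) − (ψ⁻)^{(m)}(x∘) for m = 0, 1, 2, 3, and set d⁺ = x_{i+1} − x∘. Then | (ψ⁻)''(x_i) − (1/h²) ( ψ⁻(x_{i−1}) − 2 ψ⁻(x_i) + ψ⁺(x_{i+1}) − Σ_{m=0}^{3} (d⁺)^m J_m / m! ) | ≤ (M⁻/12 + (M⁺ + M⁻)/24) h². -/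

import Mathlib

open Set

/-- On an open set, iterated derivative within equals the global one. -/
lemma itD_open {f : ℝ → ℝ} {s : Set ℝ} (hs : IsOpen s) (k : ℕ) :
    Set.EqOn (iteratedDerivWithin k f s) (iteratedDeriv k f) s := by
  intro y hy
  rw [iteratedDerivWithin_eq_iteratedFDerivWithin, iteratedDeriv_eq_iteratedFDeriv,
    iteratedFDerivWithin_of_isOpen k hs hy]

lemma itD_diffAt {f : ℝ → ℝ} {a b : ℝ} (hf : ContDiffOn ℝ 4 f (Set.Ioo a b))
    {k : ℕ} (hk : k < 4) {y : ℝ} (hy : y ∈ Set.Ioo a b) :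
    DifferentiableAt ℝ (iteratedDeriv k f) y := by
  have h1 : DifferentiableOn ℝ (iteratedDerivWithin k f (Set.Ioo a b)) (Set.Ioo a b) :=
    hf.differentiableOn_iteratedDerivWithin (by exact_mod_cast hk) isOpen_Ioo.uniqueDiffOn
  have h2 : DifferentiableOn ℝ (iteratedDeriv k f) (Set.Ioo a b) :=
    h1.congr fun x hx => (itD_open isOpen_Ioo k hx).symm
  exact h2.differentiableAt (isOpen_Ioo.mem_nhds hy)

lemma itDW_Icc {f : ℝ → ℝ} {a b u v : ℝ} (hf : ContDiffOn ℝ 4 f (Set.Ioo a b))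
    (huv : u < v) (hsub : Set.Icc u v ⊆ Set.Ioo a b) :
    ∀ k ≤ 4, ∀ y ∈ Set.Icc u v,
      iteratedDerivWithin k f (Set.Icc u v) y = iteratedDeriv k f y := by
  intro k
  induction k with
  | zero => intro _ y hy; simp
  | succ k ih =>
    intro hk y hy
    have hk' : k ≤ 4 := by omega
    have hud : UniqueDiffWithinAt ℝ (Set.Icc u v) y := uniqueDiffOn_Icc huv y hy
    rw [iteratedDerivWithin_succ]
    have hcong : derivWithin (iteratedDerivWithin k f (Set.Icc u v)) (Set.Icc u v) y
        = derivWithin (iteratedDeriv k f) (Set.Icc u v) y :=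
      derivWithin_congr (fun x hx => ih hk' x hx) (ih hk' y hy)
    rw [hcong, (itD_diffAt hf (by omega) (hsub hy)).derivWithin hud, ← iteratedDeriv_succ]

lemma taylor_sum_eq {f : ℝ → ℝ} {a b u v c x : ℝ} (hf : ContDiffOn ℝ 4 f (Set.Ioo a b))
    (huv : u < v) (hsub : Set.Icc u v ⊆ Set.Ioo a b) (hc : c ∈ Set.Icc u v) :
    taylorWithinEval f 3 (Set.Icc u v) c x
      = ∑ m ∈ Finset.range 4, (x - c) ^ m * iteratedDeriv m f c / (Nat.factorial m : ℝ) := by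
  rw [taylor_within_apply]
  refine Finset.sum_congr rfl fun m hm => ?_
  have hm4 : m ≤ 4 := by
    have := Finset.mem_range.mp hm; omega
  rw [itDW_Icc hf huv hsub m hm4 c hc, smul_eq_mul]
  ring

lemma aux_right {f : ℝ → ℝ} {a b c x M : ℝ} (hf : ContDiffOn ℝ 4 f (Set.Ioo a b))
    (hcx : c < x) (hsub : Set.Icc c x ⊆ Set.Ioo a b)
    (hM : ∀ y ∈ Set.Icc c x, |iteratedDeriv 4 f y| ≤ M) :
    |f x - ∑ m ∈ Finset.range 4,
        (x - c) ^ m * iteratedDeriv m f c / (Nat.factorial m : ℝ)|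
      ≤ M * (x - c) ^ 4 / 24 := by
  have hf3 : ContDiffOn ℝ 3 f (Set.Icc c x) := (hf.mono hsub).of_le (by norm_num)
  have hf' : DifferentiableOn ℝ (iteratedDerivWithin 3 f (Set.Icc c x)) (Set.Ioo c x) :=
    ((hf.mono hsub).differentiableOn_iteratedDerivWithin (by norm_num)
      (uniqueDiffOn_Icc hcx)).mono Set.Ioo_subset_Icc_self
  obtain ⟨y, hy, hrem⟩ := taylor_mean_remainder_lagrange (n := 3) hcx.ne
    (by rwa [Set.uIcc_of_le hcx.le]) (by rwa [Set.uIcc_of_le hcx.le, Set.uIoo_of_lt hcx])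
  rw [Set.uIcc_of_le hcx.le] at hrem
  rw [Set.uIoo_of_lt hcx] at hy
  rw [taylor_sum_eq hf hcx hsub (Set.left_mem_Icc.mpr hcx.le)] at hrem
  rw [hrem, itDW_Icc hf hcx hsub 4 le_rfl y (Set.Ioo_subset_Icc_self hy)]
  have h4 : (0 : ℝ) < (x - c) ^ 4 := by
    have : 0 < x - c := by linarith
    positivity
  have hb := hM y (Set.Ioo_subset_Icc_self hy)
  have hfac : ((3 + 1).factorial : ℝ) = 24 := by norm_num [Nat.factorial]
  rw [hfac, abs_div, abs_mul, abs_of_pos h4]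
  have h24 : |(24 : ℝ)| = 24 := by norm_num
  rw [h24]
  gcongr

lemma aux_left {f : ℝ → ℝ} {a b c x M : ℝ} (hf : ContDiffOn ℝ 4 f (Set.Ioo a b))
    (hxc : x < c) (hsub : Set.Icc x c ⊆ Set.Ioo a b)
    (hM : ∀ y ∈ Set.Icc x c, |iteratedDeriv 4 f y| ≤ M) :
    |f x - ∑ m ∈ Finset.range 4,
        (x - c) ^ m * iteratedDeriv m f c / (Nat.factorial m : ℝ)|
      ≤ M * (c - x) ^ 4 / 24 := by
  have hg : ContDiffOn ℝ 4 (fun t => f (-t)) (Set.Ioo (-b) (-a)) := by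
    refine hf.comp (contDiff_neg.contDiffOn) ?_
    intro t ht
    simp only [Set.mem_Ioo] at ht ⊢
    constructor <;> linarith [ht.1, ht.2]
  have hsub' : Set.Icc (-c) (-x) ⊆ Set.Ioo (-b) (-a) := by
    intro y hy
    simp only [Set.mem_Icc] at hy
    have : -y ∈ Set.Ioo a b := hsub ⟨by linarith [hy.2], by linarith [hy.1]⟩
    simp only [Set.mem_Ioo] at this ⊢
    constructor <;> linarith [this.1, this.2]
  have hM' : ∀ y ∈ Set.Icc (-c) (-x), |iteratedDeriv 4 (fun t => f (-t)) y| ≤ M := by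
    intro y hy
    simp only [Set.mem_Icc] at hy
    rw [iteratedDeriv_comp_neg 4 f y]
    simp only [smul_eq_mul]
    have : ((-1 : ℝ)) ^ 4 = 1 := by norm_num
    rw [this, one_mul]
    exact hM (-y) ⟨by linarith [hy.2], by linarith [hy.1]⟩
  have key := aux_right (c := -c) (x := -x) hg (by linarith) hsub' hM'
  simp only [neg_neg] at key
  have e2 : ∀ m ∈ Finset.range 4,
      (-x - -c) ^ m * iteratedDeriv m (fun t => f (-t)) (-c) / (Nat.factorial m : ℝ)
        = (x - c) ^ m * iteratedDeriv m f c / (Nat.factorial m : ℝ) := by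
    intro m _
    rw [iteratedDeriv_comp_neg m f (-c), neg_neg, smul_eq_mul]
    have : (-x - -c) ^ m * ((-1 : ℝ) ^ m * iteratedDeriv m f c)
        = ((-x - -c) * (-1)) ^ m * iteratedDeriv m f c := by
      rw [mul_pow]; ring
    rw [this]
    have : (-x - -c) * (-1 : ℝ) = x - c := by ring
    rw [this]
  rw [Finset.sum_congr rfl e2] at key
  have e3 : (-x - -c) = c - x := by ring
  rw [e3] at key
  exact key

/-- Taylor-series correction formula for the second-derivative finite-difference
stencil of the immersed interface method: for a field equal to `ψ⁻` left of the
interface point `x∘` and `ψ⁺` right of it, the three-point centered second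
difference corrected by the jumps `J_m = [[ψ^(m)]]` (for `m = 0, 1, 2, 3`)
approximates the one-sided second derivative `(ψ⁻)''` at the center node to
second order in `h`. -/
theorem iim_second_derivative_correction
    (h xi xm1 x1 : ℝ) (hh : 0 < h) (hxm1 : xm1 = xi - h) (hx1 : x1 = xi + h)
    (xo : ℝ) (hxo : xo ∈ Set.Ioo xi x1)
    (a b : ℝ) (hsub : Set.Icc xm1 x1 ⊆ Set.Ioo a b)
    (ψm ψp : ℝ → ℝ)
    (hψm : ContDiffOn ℝ 4 ψm (Set.Ioo a b))
    (hψp : ContDiffOn ℝ 4 ψp (Set.Ioo a b))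
    (Mm Mp : ℝ)
    (hMm : ∀ x ∈ Set.Icc xm1 x1, |iteratedDeriv 4 ψm x| ≤ Mm)
    (hMp : ∀ x ∈ Set.Icc xm1 x1, |iteratedDeriv 4 ψp x| ≤ Mp) :
    |iteratedDeriv 2 ψm xi
        - (1 / h ^ 2) * (ψm xm1 - 2 * ψm xi + ψp x1
            - ∑ m ∈ Finset.range 4,
                (x1 - xo) ^ m
                  * (iteratedDeriv m ψp xo - iteratedDeriv m ψm xo)
                  / (Nat.factorial m : ℝ))|
      ≤ (Mm / 12 + (Mp + Mm) / 24) * h ^ 2 := by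
  obtain ⟨hxo1, hxo2⟩ := hxo
  have hm1i : xm1 < xi := by rw [hxm1]; linarith
  have hix1 : xi < x1 := by rw [hx1]; linarith
  have hm1x1 : xm1 < x1 := by linarith
  have hs1 : Set.Icc xm1 xi ⊆ Set.Ioo a b :=
    fun y hy => hsub ⟨hy.1, le_trans hy.2 hix1.le⟩
  have hs2 : Set.Icc xi x1 ⊆ Set.Ioo a b :=
    fun y hy => hsub ⟨le_trans hm1i.le hy.1, hy.2⟩
  have hs3 : Set.Icc xo x1 ⊆ Set.Ioo a b :=
    fun y hy => hsub ⟨le_trans (le_trans hm1i.le hxo1.le) hy.1, hy.2⟩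
  have hMm0 : 0 ≤ Mm := le_trans (abs_nonneg _) (hMm xi ⟨hm1i.le, hix1.le⟩)
  have hMp0 : 0 ≤ Mp := le_trans (abs_nonneg _) (hMp xi ⟨hm1i.le, hix1.le⟩)
  -- four Taylor remainder bounds
  have hR1 := aux_left hψm hm1i hs1
    (fun y hy => hMm y ⟨hy.1, le_trans hy.2 hix1.le⟩)
  have hR2 := aux_right hψm hix1 hs2
    (fun y hy => hMm y ⟨le_trans hm1i.le hy.1, hy.2⟩)
  have hR3 := aux_right hψp hxo2 hs3
    (fun y hy => hMp y ⟨le_trans (le_trans hm1i.le hxo1.le) hy.1, hy.2⟩)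
  have hR4 := aux_right hψm hxo2 hs3
    (fun y hy => hMm y ⟨le_trans (le_trans hm1i.le hxo1.le) hy.1, hy.2⟩)
  have eh1 : xi - xm1 = h := by rw [hxm1]; ring
  have eh2 : x1 - xi = h := by rw [hx1]; ring
  rw [eh1] at hR1
  rw [eh2] at hR2
  have hd4 : (x1 - xo) ^ 4 ≤ h ^ 4 := by
    apply pow_le_pow_left₀ (by linarith)
    rw [hx1]; linarith
  have hR3' : |ψp x1 - ∑ m ∈ Finset.range 4,
      (x1 - xo) ^ m * iteratedDeriv m ψp xo / (Nat.factorial m : ℝ)| ≤ Mp * h ^ 4 / 24 := by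
    refine le_trans hR3 ?_
    have := mul_le_mul_of_nonneg_left hd4 hMp0
    linarith
  have hR4' : |ψm x1 - ∑ m ∈ Finset.range 4,
      (x1 - xo) ^ m * iteratedDeriv m ψm xo / (Nat.factorial m : ℝ)| ≤ Mm * h ^ 4 / 24 := by
    refine le_trans hR4 ?_
    have := mul_le_mul_of_nonneg_left hd4 hMm0
    linarith
  have hne : h ≠ 0 := ne_of_gt hh
  set A := ψm xm1 - ∑ m ∈ Finset.range 4,
      (xm1 - xi) ^ m * iteratedDeriv m ψm xi / (Nat.factorial m : ℝ) with hA
  set B := ψm x1 - ∑ m ∈ Finset.range 4,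
      h ^ m * iteratedDeriv m ψm xi / (Nat.factorial m : ℝ) with hB
  set C := ψp x1 - ∑ m ∈ Finset.range 4,
      (x1 - xo) ^ m * iteratedDeriv m ψp xo / (Nat.factorial m : ℝ) with hC
  set D := ψm x1 - ∑ m ∈ Finset.range 4,
      (x1 - xo) ^ m * iteratedDeriv m ψm xo / (Nat.factorial m : ℝ) with hD
  have key : iteratedDeriv 2 ψm xi
        - (1 / h ^ 2) * (ψm xm1 - 2 * ψm xi + ψp x1
            - ∑ m ∈ Finset.range 4,
                (x1 - xo) ^ m
                  * (iteratedDeriv m ψp xo - iteratedDeriv m ψm xo)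
                  / (Nat.factorial m : ℝ))
      = -(A + B + C - D) / h ^ 2 := by
    rw [hA, hB, hC, hD]
    subst hxm1 hx1
    simp only [Finset.sum_range_succ, Finset.sum_range_zero, Nat.factorial, iteratedDeriv_zero]
    push_cast
    field_simp
    ring
  rw [key, abs_div, abs_neg, abs_of_pos (pow_pos hh 2), div_le_iff₀ (pow_pos hh 2)]
  have tri : |A + B + C - D| ≤ |A| + |B| + |C| + |D| := by
    calc |A + B + C - D| ≤ |A + B + C| + |D| := abs_sub _ _
      _ ≤ |A + B| + |C| + |D| := by linarith [abs_add_le (A + B) C]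
      _ ≤ |A| + |B| + |C| + |D| := by linarith [abs_add_le A B]
  calc |A + B + C - D| ≤ |A| + |B| + |C| + |D| := tri
    _ ≤ Mm * h ^ 4 / 24 + Mm * h ^ 4 / 24 + Mp * h ^ 4 / 24 + Mm * h ^ 4 / 24 := by
        have := hR1; have := hR2
        linarith [hR1, hR2, hR3', hR4']
    _ = (Mm / 12 + (Mp + Mm) / 24) * h ^ 2 * h ^ 2 := by ring
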